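/- Let M(φ, id) be a Mallows model on n elements with 0.5 ≤ φ < 1 and central ranking the identity permutation id. For any index i ∈ [n] and any parameter −0.2 < α < 0.2, the expectation over π ~ M(φ, id) of (1/φ)^{α·(v_π^{←}[i] − E[v_π^{←}[i]])} is at most e^{10α²}. -/

import Mathlib

open scoped Classical
open Finset

namespace Mallows

/-- Kendall-tau distance between two permutations of `Fin n`: the number of pairs of
elements whose relative order differs in the two permutations. -/
noncomputable def dKT {n : ℕ} (π σ : Equiv.Perm (Fin n)) : ℕ :=
  (Finset.univ.filter (fun p : Fin n × Fin n =>
    p.1 < p.2 ∧ ¬((π.symm p.1 < π.symm p.2) ↔ (σ.symm p.1 < σ.symm p.2)))).card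

/-- Probability mass function of the Mallows model `M(φ, π₀)`. -/
noncomputable def mallowsPMF {n : ℕ} (φ : ℝ) (π₀ π : Equiv.Perm (Fin n)) : ℝ :=
  φ ^ dKT π π₀ / ∑ σ : Equiv.Perm (Fin n), φ ^ dKT σ π₀

/-- Expectation of `f` under `M(φ, π₀)`. -/
noncomputable def mExp {n : ℕ} (φ : ℝ) (π₀ : Equiv.Perm (Fin n))
    (f : Equiv.Perm (Fin n) → ℝ) : ℝ :=
  ∑ π : Equiv.Perm (Fin n), mallowsPMF φ π₀ π * f π

/-- Probability of the event `A` under `M(φ, π₀)`. -/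
noncomputable def mProb {n : ℕ} (φ : ℝ) (π₀ : Equiv.Perm (Fin n))
    (A : Equiv.Perm (Fin n) → Prop) : ℝ :=
  ∑ π : Equiv.Perm (Fin n), if A π then mallowsPMF φ π₀ π else 0

/-- Total variation distance between two pmfs on permutations of `Fin n`. -/
noncomputable def tvDist {n : ℕ} (p q : Equiv.Perm (Fin n) → ℝ) : ℝ :=
  (∑ π : Equiv.Perm (Fin n), |p π - q π|) / 2

/-- Kullback–Leibler divergence between two pmfs on permutations of `Fin n`. -/
noncomputable def klDiv {n : ℕ} (p q : Equiv.Perm (Fin n) → ℝ) : ℝ :=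
  ∑ π : Equiv.Perm (Fin n), p π * Real.log (p π / q π)

/-- Position vector of a permutation: entry `i` is the position `π⁻¹ i` of element `i`. -/
noncomputable def posVec {n : ℕ} (π : Equiv.Perm (Fin n)) : EuclideanSpace ℝ (Fin n) :=
  WithLp.toLp 2 <| fun i => ((π.symm i).1 : ℝ)

/-- Front adjustment vector of `π` with respect to `π̂`: entry `i` counts the elements `j`
with `π̂⁻¹ j < π̂⁻¹ i` and `π⁻¹ j > π⁻¹ i`. -/
noncomputable def leftAdj {n : ℕ} (πh π : Equiv.Perm (Fin n)) : EuclideanSpace ℝ (Fin n) :=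
  WithLp.toLp 2 <| fun i => ((Finset.univ.filter (fun j : Fin n =>
    πh.symm j < πh.symm i ∧ π.symm i < π.symm j)).card : ℝ)

/-- Back adjustment vector of `π` with respect to `π̂`: entry `i` counts the elements `j`
with `π̂⁻¹ j > π̂⁻¹ i` and `π⁻¹ j < π⁻¹ i`. -/
noncomputable def rightAdj {n : ℕ} (πh π : Equiv.Perm (Fin n)) : EuclideanSpace ℝ (Fin n) :=
  WithLp.toLp 2 <| fun i => ((Finset.univ.filter (fun j : Fin n =>
    πh.symm i < πh.symm j ∧ π.symm j < π.symm i)).card : ℝ)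

noncomputable def vNat {n : ℕ} (π : Equiv.Perm (Fin n)) (i : Fin n) : ℕ :=
  (Finset.univ.filter (fun j : Fin n => j < i ∧ π.symm i < π.symm j)).card

lemma leftAdj_one {n : ℕ} (π : Equiv.Perm (Fin n)) (i : Fin n) :
    leftAdj 1 π i = (vNat π i : ℝ) := by
  simp [leftAdj, vNat, Equiv.Perm.one_symm, Equiv.Perm.coe_one, id_eq]
  congr 1

lemma dKT_one {n : ℕ} (π : Equiv.Perm (Fin n)) : dKT π 1 = ∑ i : Fin n, vNat π i := by
  classical
  have key : ∀ a b : Fin n,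
      (a < b ∧ ¬((π.symm a < π.symm b) ↔ ((1 : Equiv.Perm (Fin n)).symm a < (1 : Equiv.Perm (Fin n)).symm b)))
        ↔ (a < b ∧ π.symm b < π.symm a) := by
    intro a b
    simp only [Equiv.Perm.one_symm, Equiv.Perm.coe_one, id_eq]
    constructor
    · rintro ⟨h, h2⟩
      have hne : π.symm a ≠ π.symm b := fun he => (ne_of_lt h) (π.symm.injective he)
      have hnl : ¬ (π.symm a < π.symm b) := fun hl => h2 ⟨fun _ => h, fun _ => hl⟩
      exact ⟨h, lt_of_le_of_ne (not_lt.1 hnl) (Ne.symm hne)⟩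
    · rintro ⟨h, h2⟩
      exact ⟨h, fun hiff => absurd (hiff.mpr h) (asymm h2)⟩
  unfold dKT vNat
  rw [Finset.card_filter, Fintype.sum_prod_type, Finset.sum_comm]
  refine Finset.sum_congr rfl fun b _ => ?_
  rw [Finset.card_filter]
  refine Finset.sum_congr rfl fun a _ => ?_
  rw [if_congr (key a b) rfl rfl]

noncomputable def insertTop {n : ℕ} (p : Fin (n + 1)) (σ : Equiv.Perm (Fin n)) :
    Equiv.Perm (Fin (n + 1)) :=
  ((finSuccEquiv' p).trans (Equiv.optionCongr σ)).trans finSuccEquivLast.symm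

@[simp] lemma insertTop_symm_last {n : ℕ} (p : Fin (n + 1)) (σ : Equiv.Perm (Fin n)) :
    (insertTop p σ).symm (Fin.last n) = p := by
  simp [insertTop, Equiv.symm_trans_apply, finSuccEquivLast_last, finSuccEquiv'_symm_none,
    ← Equiv.optionCongr_symm, Equiv.optionCongr_apply]

@[simp] lemma insertTop_symm_castSucc {n : ℕ} (p : Fin (n + 1)) (σ : Equiv.Perm (Fin n))
    (i : Fin n) : (insertTop p σ).symm (Fin.castSucc i) = p.succAbove (σ.symm i) := by
  simp [insertTop, Equiv.symm_trans_apply, finSuccEquivLast_castSucc, finSuccEquiv'_symm_some,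
    ← Equiv.optionCongr_symm, Equiv.optionCongr_apply]

@[simp] lemma insertTop_succAbove {n : ℕ} (p : Fin (n + 1)) (σ : Equiv.Perm (Fin n))
    (j : Fin n) : insertTop p σ (p.succAbove j) = Fin.castSucc (σ j) := by
  simp [insertTop, finSuccEquiv'_succAbove, finSuccEquivLast_symm_some]

lemma insertTop_injective {n : ℕ} :
    Function.Injective (fun x : Fin (n + 1) × Equiv.Perm (Fin n) => insertTop x.1 x.2) := by
  rintro ⟨p, σ⟩ ⟨q, τ⟩ h
  simp only at h
  have hp : p = q := by
    have h1 := congrArg (fun e : Equiv.Perm (Fin (n + 1)) => e.symm (Fin.last n)) h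
    simpa using h1
  subst hp
  have hσ : σ = τ := by
    refine Equiv.ext fun j => ?_
    have h1 := congrArg (fun e : Equiv.Perm (Fin (n + 1)) => e (p.succAbove j)) h
    simpa using h1
  simp [hσ]

lemma insertTop_bijective {n : ℕ} :
    Function.Bijective (fun x : Fin (n + 1) × Equiv.Perm (Fin n) => insertTop x.1 x.2) := by
  rw [Fintype.bijective_iff_injective_and_card]
  refine ⟨insertTop_injective, ?_⟩
  simp [Fintype.card_perm, Nat.factorial_succ]

lemma sum_perm_succ {n : ℕ} {M : Type*} [AddCommMonoid M] (f : Equiv.Perm (Fin (n + 1)) → M) :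
    ∑ π : Equiv.Perm (Fin (n + 1)), f π
      = ∑ p : Fin (n + 1), ∑ σ : Equiv.Perm (Fin n), f (insertTop p σ) := by
  have h := Fintype.sum_bijective _ insertTop_bijective
    (fun x : Fin (n + 1) × Equiv.Perm (Fin n) => f (insertTop x.1 x.2)) f (fun x => rfl)
  rw [← h, Fintype.sum_prod_type]

lemma vNat_insertTop_castSucc {n : ℕ} (p : Fin (n + 1)) (σ : Equiv.Perm (Fin n)) (i : Fin n) :
    vNat (insertTop p σ) (Fin.castSucc i) = vNat σ i := by
  unfold vNat
  rw [Finset.card_filter, Finset.card_filter, Fin.sum_univ_castSucc]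
  simp only [insertTop_symm_castSucc, insertTop_symm_last,
    Fin.castSucc_lt_castSucc_iff, Fin.succAbove_lt_succAbove_iff]
  rw [if_neg (by rintro ⟨h, -⟩; exact absurd h (Fin.castSucc_lt_last i).asymm)]
  simp

lemma vNat_insertTop_last {n : ℕ} (p : Fin (n + 1)) (σ : Equiv.Perm (Fin n)) :
    vNat (insertTop p σ) (Fin.last n) = n - (p : ℕ) := by
  unfold vNat
  rw [Finset.card_filter, Fin.sum_univ_castSucc]
  simp only [insertTop_symm_castSucc, insertTop_symm_last, lt_self_iff_false, false_and,
    if_false, add_zero, Fin.castSucc_lt_last, true_and]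
  have h1 : ∀ j' : Fin n, (p < p.succAbove (σ.symm j')) ↔ ((p : ℕ) ≤ ((σ.symm j' : Fin n) : ℕ)) := by
    intro j'
    rw [Fin.lt_succAbove_iff_le_castSucc, Fin.le_def, Fin.coe_castSucc]
  simp only [h1]
  rw [Equiv.sum_comp σ.symm (fun j : Fin n => if (p : ℕ) ≤ (j : ℕ) then (1 : ℕ) else 0)]
  rw [Fin.sum_univ_eq_sum_range (fun k => if (p : ℕ) ≤ k then (1 : ℕ) else 0) n]
  rw [← Finset.card_filter]
  have h2 : (Finset.range n).filter (fun k => (p : ℕ) ≤ k) = Finset.Ico (p : ℕ) n := by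
    ext k
    simp only [Finset.mem_filter, Finset.mem_range, Finset.mem_Ico]
    tauto
  rw [h2, Nat.card_Ico]

lemma dKT_insertTop {n : ℕ} (p : Fin (n + 1)) (σ : Equiv.Perm (Fin n)) :
    dKT (insertTop p σ) 1 = dKT σ 1 + (n - (p : ℕ)) := by
  rw [dKT_one, dKT_one, Fin.sum_univ_castSucc]
  simp [vNat_insertTop_castSucc, vNat_insertTop_last]

noncomputable def Zsum (φ : ℝ) (n : ℕ) : ℝ := ∑ π : Equiv.Perm (Fin n), φ ^ dKT π 1

lemma Zsum_pos {φ : ℝ} (hφ : 0 < φ) (n : ℕ) : 0 < Zsum φ n :=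
  Finset.sum_pos (fun _ _ => pow_pos hφ _) Finset.univ_nonempty

lemma sum_pow_reflect (f : ℕ → ℝ) (n : ℕ) :
    ∑ p : Fin (n + 1), f (n - (p : ℕ)) = ∑ k ∈ Finset.range (n + 1), f k := by
  rw [Fin.sum_univ_eq_sum_range (fun p => f (n - p)) (n + 1),
    ← Finset.sum_range_reflect (fun k => f k) (n + 1)]
  simp

lemma Zsum_succ (φ : ℝ) (n : ℕ) :
    Zsum φ (n + 1) = (∑ k ∈ Finset.range (n + 1), φ ^ k) * Zsum φ n := by
  rw [Zsum, sum_perm_succ (fun π => φ ^ dKT π 1)]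
  have h1 : ∀ p : Fin (n + 1), ∑ σ : Equiv.Perm (Fin n), φ ^ dKT (insertTop p σ) 1
      = φ ^ (n - (p : ℕ)) * Zsum φ n := by
    intro p
    calc ∑ σ : Equiv.Perm (Fin n), φ ^ dKT (insertTop p σ) 1
        = ∑ σ : Equiv.Perm (Fin n), φ ^ dKT σ 1 * φ ^ (n - (p : ℕ)) :=
          Finset.sum_congr rfl fun σ _ => by rw [dKT_insertTop, pow_add]
      _ = (∑ σ : Equiv.Perm (Fin n), φ ^ dKT σ 1) * φ ^ (n - (p : ℕ)) := by
          rw [Finset.sum_mul]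
      _ = φ ^ (n - (p : ℕ)) * Zsum φ n := by rw [mul_comm]; rfl
  simp only [h1]
  rw [← Finset.sum_mul, sum_pow_reflect (fun k => φ ^ k) n]

lemma key (φ : ℝ) : ∀ (n : ℕ) (i : Fin n) (g : ℕ → ℝ),
    (∑ k ∈ Finset.range ((i : ℕ) + 1), φ ^ k)
        * (∑ π : Equiv.Perm (Fin n), φ ^ dKT π 1 * g (vNat π i))
      = (∑ k ∈ Finset.range ((i : ℕ) + 1), φ ^ k * g k) * Zsum φ n := by
  intro n
  induction n with
  | zero => exact fun i => i.elim0
  | succ n ih =>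
    intro i g
    induction i using Fin.lastCases with
    | last =>
      rw [sum_perm_succ (fun π => φ ^ dKT π 1 * g (vNat π (Fin.last n)))]
      have h1 : ∀ p : Fin (n + 1), ∑ σ : Equiv.Perm (Fin n),
          φ ^ dKT (insertTop p σ) 1 * g (vNat (insertTop p σ) (Fin.last n))
          = (φ ^ (n - (p : ℕ)) * g (n - (p : ℕ))) * Zsum φ n := by
        intro p
        calc ∑ σ : Equiv.Perm (Fin n),
              φ ^ dKT (insertTop p σ) 1 * g (vNat (insertTop p σ) (Fin.last n))
            = ∑ σ : Equiv.Perm (Fin n),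
              φ ^ dKT σ 1 * (φ ^ (n - (p : ℕ)) * g (n - (p : ℕ))) :=
              Finset.sum_congr rfl fun σ _ => by
                simp only [dKT_insertTop, vNat_insertTop_last, pow_add]; ring
          _ = (∑ σ : Equiv.Perm (Fin n), φ ^ dKT σ 1)
              * (φ ^ (n - (p : ℕ)) * g (n - (p : ℕ))) := by rw [Finset.sum_mul]
          _ = (φ ^ (n - (p : ℕ)) * g (n - (p : ℕ))) * Zsum φ n := by rw [mul_comm]; rfl
      simp only [h1]
      rw [← Finset.sum_mul, sum_pow_reflect (fun k => φ ^ k * g k) n]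
      rw [Zsum_succ φ n]
      simp only [Fin.val_last]
      ring
    | cast i =>
      rw [sum_perm_succ (fun π => φ ^ dKT π 1 * g (vNat π (Fin.castSucc i)))]
      have h1 : ∀ p : Fin (n + 1), ∑ σ : Equiv.Perm (Fin n),
          φ ^ dKT (insertTop p σ) 1 * g (vNat (insertTop p σ) (Fin.castSucc i))
          = φ ^ (n - (p : ℕ))
            * (∑ σ : Equiv.Perm (Fin n), φ ^ dKT σ 1 * g (vNat σ i)) := by
        intro p
        calc ∑ σ : Equiv.Perm (Fin n),
              φ ^ dKT (insertTop p σ) 1 * g (vNat (insertTop p σ) (Fin.castSucc i))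
            = ∑ σ : Equiv.Perm (Fin n),
              φ ^ (n - (p : ℕ)) * (φ ^ dKT σ 1 * g (vNat σ i)) :=
              Finset.sum_congr rfl fun σ _ => by
                simp only [dKT_insertTop, vNat_insertTop_castSucc, pow_add]; ring
          _ = φ ^ (n - (p : ℕ))
              * (∑ σ : Equiv.Perm (Fin n), φ ^ dKT σ 1 * g (vNat σ i)) := by
              rw [Finset.mul_sum]
      simp only [h1]
      rw [← Finset.sum_mul, sum_pow_reflect (fun k => φ ^ k) n]
      simp only [Fin.coe_castSucc]
      calc (∑ k ∈ Finset.range ((i : ℕ) + 1), φ ^ k)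
            * ((∑ k ∈ Finset.range (n + 1), φ ^ k)
              * (∑ σ : Equiv.Perm (Fin n), φ ^ dKT σ 1 * g (vNat σ i)))
          = (∑ k ∈ Finset.range (n + 1), φ ^ k)
            * ((∑ k ∈ Finset.range ((i : ℕ) + 1), φ ^ k)
              * (∑ σ : Equiv.Perm (Fin n), φ ^ dKT σ 1 * g (vNat σ i))) := by ring
        _ = (∑ k ∈ Finset.range (n + 1), φ ^ k)
            * ((∑ k ∈ Finset.range ((i : ℕ) + 1), φ ^ k * g k) * Zsum φ n) := by
              rw [ih i g]
        _ = (∑ k ∈ Finset.range ((i : ℕ) + 1), φ ^ k * g k) * Zsum φ (n + 1) := by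
              rw [Zsum_succ φ n]; ring

lemma mExp_eq_sum_div {n : ℕ} (φ : ℝ) (f : Equiv.Perm (Fin n) → ℝ) :
    mExp φ 1 f = (∑ π : Equiv.Perm (Fin n), φ ^ dKT π 1 * f π) / Zsum φ n := by
  unfold mExp mallowsPMF Zsum
  simp_rw [div_mul_eq_mul_div]
  rw [← Finset.sum_div]

lemma mExp_vNat {φ : ℝ} (hφ : 0 < φ) {n : ℕ} (i : Fin n) (g : ℕ → ℝ) :
    mExp φ 1 (fun π => g (vNat π i))
      = (∑ k ∈ Finset.range ((i : ℕ) + 1), φ ^ k * g k)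
        / (∑ k ∈ Finset.range ((i : ℕ) + 1), φ ^ k) := by
  have hW : 0 < ∑ k ∈ Finset.range ((i : ℕ) + 1), φ ^ k :=
    Finset.sum_pos (fun _ _ => pow_pos hφ _) (Finset.nonempty_range_iff.mpr (Nat.succ_ne_zero _))
  have hZ : 0 < Zsum φ n := Zsum_pos hφ n
  rw [mExp_eq_sum_div, div_eq_div_iff hZ.ne' hW.ne', mul_comm]
  exact key φ n i g

lemma tilt_lt_one {φ β : ℝ} (hφ0 : 0.5 ≤ φ) (hφ1 : φ < 1) (hβ : |β| ≤ 0.2) :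
    φ * Real.exp (Real.log (1/φ) * β) < 1 := by
  have hφp : (0:ℝ) < φ := by norm_num at hφ0 ⊢; linarith
  have hlog : Real.log φ < 0 := Real.log_neg hφp hφ1
  have hL : Real.log (1/φ) = -Real.log φ := by rw [one_div, Real.log_inv]
  have h1 : φ * Real.exp (Real.log (1/φ) * β) = Real.exp (Real.log φ + Real.log (1/φ) * β) := by
    rw [Real.exp_add, Real.exp_log hφp]
  rw [h1, Real.exp_lt_one_iff, hL]
  have h2 : -Real.log φ * β ≤ -Real.log φ * |β| :=
    mul_le_mul_of_nonneg_left (le_abs_self β) (by linarith)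
  have h3 : -Real.log φ * |β| ≤ -Real.log φ * 0.2 :=
    mul_le_mul_of_nonneg_left hβ (by linarith)
  linarith

lemma one_sub_mul_le {a b c : ℝ} (h1 : a * b = c ^ 2) (h2 : 2 * c ≤ a + b) :
    (1 - a) * (1 - b) ≤ (1 - c) ^ 2 := by nlinarith

set_option maxHeartbeats 1000000 in
lemma exp_pair_bound {φ α : ℝ} (hφ0 : 0.5 ≤ φ) (hφ1 : φ < 1) (hα : |α| ≤ 0.2) :
    (1 - φ)^2 ≤ Real.exp (10 * α ^ 2) *
      ((1 - φ * Real.exp (Real.log (1/φ) * α))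
        * (1 - φ * Real.exp (-(Real.log (1/φ) * α)))) := by
  have hφp : (0:ℝ) < φ := by norm_num at hφ0 ⊢; linarith
  have hφh : (0.5:ℝ) ≤ φ := by norm_num at hφ0 ⊢; linarith
  have hlog : Real.log φ < 0 := Real.log_neg hφp hφ1
  set L : ℝ := Real.log (1/φ) with hLdef
  have hL : L = -Real.log φ := by rw [hLdef, one_div, Real.log_inv]
  have hLpos : 0 < L := by rw [hL]; linarith
  have hL2 : L ≤ 0.6931471808 := by
    have h1 : Real.log 0.5 ≤ Real.log φ := Real.log_le_log (by norm_num) hφ0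
    have h2 : Real.log 0.5 = -Real.log 2 := by
      rw [show (0.5:ℝ) = 2⁻¹ by norm_num, Real.log_inv]
    have h3 := Real.log_two_lt_d9
    rw [hL]; rw [h2] at h1; linarith
  have hLC : L ≤ (1 - φ)/φ := by
    have h1 : L ≤ 1/φ - 1 := Real.log_le_sub_one_of_pos (by positivity)
    have h2 : 1/φ - 1 = (1-φ)/φ := by field_simp
    linarith [h2 ▸ h1]
  set t : ℝ := L * α with htdef
  have habs : |t| ≤ 0.2 * L := by
    rw [htdef, abs_mul, abs_of_pos hLpos, mul_comm (0.2:ℝ) L]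
    exact mul_le_mul_of_nonneg_left hα hLpos.le
  have hu014 : |t| ≤ 0.14 := by nlinarith
  have hα2 : α ^ 2 ≤ 0.04 := by nlinarith [sq_abs α, abs_nonneg α]
  have hexpt : Real.exp t * Real.exp (-t) = 1 := by rw [← Real.exp_add]; simp
  -- bound on φ(eᵗ + e⁻ᵗ - 2)
  have hexpsum : φ * (Real.exp t + Real.exp (-t) - 2) ≤ 2.74 * α ^ 2 * (1-φ)^2 := by
    set u : ℝ := |t| with hudef
    have hu0 : 0 ≤ u := abs_nonneg t
    have hu14 : u ≤ 0.14 := hu014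
    have hU : Real.exp t + Real.exp (-t) = Real.exp u + Real.exp (-u) := by
      rcases abs_cases t with ⟨h1, _⟩ | ⟨h1, _⟩
      · rw [hudef, h1]
      · rw [hudef, h1, neg_neg, add_comm]
    have h1 : 1 - u ≤ Real.exp (-u) := by
      have := Real.add_one_le_exp (-u); linarith
    have h2 : Real.exp (-u) * Real.exp u = 1 := by rw [← Real.exp_add]; simp
    have h1e : (1 - u) * Real.exp u ≤ 1 := by
      have := mul_le_mul_of_nonneg_right h1 (Real.exp_pos u).le
      linarith [h2]
    have hEu : Real.exp u ≤ 1.17 := by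
      nlinarith [Real.exp_pos u]
    have h3 : Real.exp u - 1 ≤ u * Real.exp u := by nlinarith [h1e]
    have h5 : (0:ℝ) ≤ Real.exp u - 1 := by
      have := Real.add_one_le_exp u; linarith
    have h10 : Real.exp u - 1 ≤ 1.17 * u := by
      have h11 := mul_le_mul_of_nonneg_left hEu hu0
      nlinarith
    have h6 : Real.exp u + Real.exp (-u) - 2 = Real.exp (-u) * (Real.exp u - 1)^2 := by
      rw [Real.exp_neg]
      have h7 := (Real.exp_pos u).ne'
      field_simp
      ring
    have h8 : Real.exp (-u) ≤ 1 := Real.exp_le_one_iff.mpr (by linarith)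
    have h9 : Real.exp u + Real.exp (-u) - 2 ≤ 1.37 * u ^ 2 := by
      have h12 : (Real.exp u - 1)^2 ≤ (1.17 * u)^2 := by nlinarith
      have h13 : Real.exp (-u) * (Real.exp u - 1)^2 ≤ (Real.exp u - 1)^2 :=
        mul_le_of_le_one_left (sq_nonneg _) h8
      rw [h6]; nlinarith [sq_nonneg u]
    have hut : u ^ 2 = t ^ 2 := sq_abs t
    have hD2 : L ^ 2 ≤ ((1-φ)/φ) ^ 2 := pow_le_pow_left₀ hLpos.le hLC 2
    have ht2 : t ^ 2 ≤ α ^ 2 * ((1-φ)/φ) ^ 2 := by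
      rw [htdef, mul_pow]
      nlinarith [sq_nonneg α]
    have h12 : ((1-φ)/φ) ^ 2 * φ ≤ 2 * (1-φ)^2 := by
      rw [div_pow, div_mul_eq_mul_div, div_le_iff₀ (by positivity)]
      nlinarith [mul_nonneg (mul_nonneg (sq_nonneg (1-φ)) hφp.le) (by linarith : (0:ℝ) ≤ 2*φ - 1)]
    have m1 : t ^ 2 * φ ≤ (α ^ 2 * ((1-φ)/φ) ^ 2) * φ := mul_le_mul_of_nonneg_right ht2 hφp.le
    have m2 : α ^ 2 * (((1-φ)/φ) ^ 2 * φ) ≤ α ^ 2 * (2 * (1-φ)^2) :=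
      mul_le_mul_of_nonneg_left h12 (sq_nonneg α)
    have m3 : φ * (Real.exp u + Real.exp (-u) - 2) ≤ φ * (1.37 * u ^ 2) :=
      mul_le_mul_of_nonneg_left h9 hφp.le
    rw [hU]
    nlinarith [m1, m2, m3, hut]
  set s : ℝ := 10 * α ^ 2 with hsdef
  have hs0 : (0:ℝ) ≤ s := by positivity
  have hs04 : s ≤ 0.4 := by rw [hsdef]; linarith
  have hes : Real.exp (-s) * (1 + s) ≤ 1 := by
    have h1 := Real.add_one_le_exp s
    have h2 : Real.exp (-s) * Real.exp s = 1 := by rw [← Real.exp_add]; simp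
    nlinarith [Real.exp_pos (-s)]
  have hes2 : s ≤ (1 - Real.exp (-s)) * 1.4 := by
    have h3 : (0:ℝ) ≤ 1 - Real.exp (-s) := by
      have := Real.exp_le_one_iff.mpr (by linarith : -s ≤ 0); linarith
    nlinarith
  have hABid : (1 - φ * Real.exp t) * (1 - φ * Real.exp (-t))
      = (1-φ)^2 - φ * (Real.exp t + Real.exp (-t) - 2) := by
    linear_combination (φ^2) * hexpt
  have h5 : s * (1-φ)^2 ≤ (1 - Real.exp (-s)) * 1.4 * (1-φ)^2 :=
    mul_le_mul_of_nonneg_right hes2 (sq_nonneg _)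
  have hkey : φ * (Real.exp t + Real.exp (-t) - 2) ≤ (1 - Real.exp (-s)) * (1-φ)^2 := by
    rw [hsdef] at h5
    nlinarith [sq_nonneg (1-φ)]
  have h4 : Real.exp (-s) * (1-φ)^2 ≤ (1 - φ * Real.exp t) * (1 - φ * Real.exp (-t)) := by
    rw [hABid]; linarith
  have h2 : Real.exp (-s) * Real.exp s = 1 := by rw [← Real.exp_add]; simp
  calc (1-φ)^2 = Real.exp s * (Real.exp (-s) * (1-φ)^2) := by
        rw [← mul_assoc, mul_comm (Real.exp s), h2, one_mul]
    _ ≤ Real.exp s * ((1 - φ * Real.exp t) * (1 - φ * Real.exp (-t))) :=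
        mul_le_mul_of_nonneg_left h4 (Real.exp_pos s).le

set_option maxHeartbeats 1000000 in
lemma analytic_bound {φ α : ℝ} (hφ0 : 0.5 ≤ φ) (hφ1 : φ < 1)
    (hα : |α| ≤ 0.2) {M : ℕ} (hM : M ≠ 0) :
    (∑ k ∈ Finset.range M, φ ^ k *
        Real.exp ((Real.log (1 / φ) * α) * ((k : ℝ) -
          (∑ k ∈ Finset.range M, φ ^ k * (k : ℝ)) / (∑ k ∈ Finset.range M, φ ^ k)))) /
      (∑ k ∈ Finset.range M, φ ^ k) ≤ Real.exp (10 * α ^ 2) := by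
  have hφp : (0:ℝ) < φ := by norm_num at hφ0 ⊢; linarith
  set L : ℝ := Real.log (1/φ) with hLdef
  set t : ℝ := L * α with htdef
  have hexpt : Real.exp t * Real.exp (-t) = 1 := by rw [← Real.exp_add]; simp
  set q : ℝ := φ * Real.exp t with hqdef
  set r : ℝ := φ * Real.exp (-t) with hrdef
  have hq1 : q < 1 := by
    have h := tilt_lt_one hφ0 hφ1 hα
    rw [← hLdef, ← htdef] at h
    exact h
  have hr1 : r < 1 := by
    have h := tilt_lt_one hφ0 hφ1 (show |(-α)| ≤ 0.2 by rwa [abs_neg])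
    rw [← hLdef, show L * (-α) = -t by rw [htdef]; ring] at h
    exact h
  have hq0 : 0 < q := by positivity
  have hr0 : 0 < r := by positivity
  have hqr : q * r = φ ^ 2 := by
    rw [hqdef, hrdef]
    linear_combination (φ^2) * hexpt
  set W : ℝ := ∑ k ∈ Finset.range M, φ ^ k with hWdef
  set N1 : ℝ := ∑ k ∈ Finset.range M, φ ^ k * (k : ℝ) with hN1def
  set μ : ℝ := N1 / W with hmudef
  have hWpos : 0 < W :=
    Finset.sum_pos (fun _ _ => pow_pos hφp _) (Finset.nonempty_range_iff.mpr hM)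
  have geom : ∀ {x : ℝ}, x < 1 → ∑ k ∈ Finset.range M, x ^ k = (1 - x ^ M)/(1 - x) := by
    intro x hx
    rw [geom_sum_eq hx.ne M, ← neg_div_neg_eq, neg_sub, neg_sub]
  have step1 : (∑ k ∈ Finset.range M, φ ^ k * Real.exp (t * ((k:ℝ) - μ)))
      = Real.exp (-(t * μ)) * ∑ k ∈ Finset.range M, φ ^ k * Real.exp (t * (k:ℝ)) := by
    rw [Finset.mul_sum]
    refine Finset.sum_congr rfl fun k _ => ?_
    rw [mul_sub, sub_eq_add_neg, Real.exp_add]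
    ring
  have jensen : Real.exp (-(t * μ))
      ≤ (∑ k ∈ Finset.range M, φ ^ k * Real.exp (-t * (k:ℝ))) / W := by
    have h0 : ∀ k ∈ Finset.range M, (0:ℝ) ≤ φ ^ k / W := fun k _ => by positivity
    have h1 : ∑ k ∈ Finset.range M, φ ^ k / W = 1 := by
      rw [← Finset.sum_div, div_self hWpos.ne']
    have h2 := convexOn_exp.map_sum_le h0 h1 (fun k _ => Set.mem_univ (-t * (k:ℝ)))
    simp only [smul_eq_mul] at h2
    have harg : ∑ k ∈ Finset.range M, (φ ^ k / W) * (-t * (k : ℝ)) = -(t * μ) := by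
      calc ∑ k ∈ Finset.range M, (φ ^ k / W) * (-t * (k : ℝ))
          = ∑ k ∈ Finset.range M, (-t) * ((φ ^ k * (k:ℝ)) / W) :=
            Finset.sum_congr rfl fun k _ => by ring
        _ = (-t) * ∑ k ∈ Finset.range M, (φ ^ k * (k:ℝ)) / W := by rw [Finset.mul_sum]
        _ = (-t) * (N1 / W) := by rw [← Finset.sum_div]
        _ = -(t * μ) := by rw [hmudef]; ring
    have hrhs : ∑ k ∈ Finset.range M, (φ ^ k / W) * Real.exp (-t * (k:ℝ))
        = (∑ k ∈ Finset.range M, φ ^ k * Real.exp (-t * (k:ℝ))) / W := by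
      rw [Finset.sum_div]
      exact Finset.sum_congr rfl fun k _ => by ring
    rw [harg, hrhs] at h2
    exact h2
  have hSq : ∑ k ∈ Finset.range M, φ ^ k * Real.exp (t * (k:ℝ)) = (1 - q ^ M)/(1 - q) := by
    rw [← geom hq1]
    refine Finset.sum_congr rfl fun k _ => ?_
    rw [hqdef, mul_pow, ← Real.exp_nat_mul, mul_comm (k:ℝ) t]
  have hSr : ∑ k ∈ Finset.range M, φ ^ k * Real.exp (-t * (k:ℝ)) = (1 - r ^ M)/(1 - r) := by
    rw [← geom hr1]
    refine Finset.sum_congr rfl fun k _ => ?_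
    rw [hrdef, mul_pow, ← Real.exp_nat_mul, mul_comm (k:ℝ) (-t)]
  have hWg : W = (1 - φ ^ M)/(1 - φ) := geom hφ1
  have hqrM : q ^ M * r ^ M = (φ ^ M) ^ 2 := by
    rw [← mul_pow, hqr, ← pow_mul, ← pow_mul, mul_comm 2 M]
  have hAMGM : 2 * φ ^ M ≤ q ^ M + r ^ M := by
    have h1 : Real.sqrt (q ^ M) * Real.sqrt (r ^ M) = φ ^ M := by
      rw [← Real.sqrt_mul (by positivity), hqrM, Real.sqrt_sq (by positivity)]
    have h2 := two_mul_le_add_sq (Real.sqrt (q ^ M)) (Real.sqrt (r ^ M))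
    rw [mul_assoc, h1, Real.sq_sqrt (pow_pos hq0 M).le, Real.sq_sqrt (pow_pos hr0 M).le] at h2
    exact h2
  have hab : (1 - q ^ M) * (1 - r ^ M) ≤ (1 - φ ^ M) ^ 2 := one_sub_mul_le hqrM hAMGM
  have hCs : (1-φ)^2 ≤ Real.exp (10 * α ^ 2) * ((1 - q) * (1 - r)) := by
    have h := exp_pair_bound hφ0 hφ1 hα
    rw [← hLdef, ← htdef] at h
    exact h
  have hA : 0 < 1 - q := sub_pos.mpr hq1
  have hB : 0 < 1 - r := sub_pos.mpr hr1
  have hC : 0 < 1 - φ := sub_pos.mpr hφ1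
  have hc : 0 < 1 - φ ^ M := sub_pos.mpr (pow_lt_one₀ hφp.le hφ1 hM)
  have ha : 0 < 1 - q ^ M := sub_pos.mpr (pow_lt_one₀ hq0.le hq1 hM)
  have hb : 0 < 1 - r ^ M := sub_pos.mpr (pow_lt_one₀ hr0.le hr1 hM)
  have hfinal : ((1 - r ^ M)/(1 - r) / W) * ((1 - q ^ M)/(1 - q) / W)
      ≤ Real.exp (10 * α ^ 2) := by
    rw [hWg]
    have hid : ((1 - r ^ M)/(1 - r) / ((1 - φ ^ M)/(1 - φ)))
        * ((1 - q ^ M)/(1 - q) / ((1 - φ ^ M)/(1 - φ)))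
        = ((1 - q ^ M) * (1 - r ^ M)) * (1-φ)^2
          / (((1 - q) * (1 - r)) * (1 - φ ^ M)^2) := by
      field_simp
    rw [hid, div_le_iff₀ (by positivity)]
    have e1 : ((1 - q ^ M) * (1 - r ^ M)) * (1-φ)^2 ≤ (1 - φ ^ M)^2 * (1-φ)^2 :=
      mul_le_mul_of_nonneg_right hab (by positivity)
    have e2 : (1 - φ ^ M)^2 * (1-φ)^2
        ≤ (1 - φ ^ M)^2 * (Real.exp (10 * α ^ 2) * ((1 - q) * (1 - r))) :=
      mul_le_mul_of_nonneg_left hCs (by positivity)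
    exact le_trans (le_trans e1 e2) (le_of_eq (by ring))
  calc (∑ k ∈ Finset.range M, φ ^ k * Real.exp ((L * α) * ((k:ℝ) - μ))) / W
      = Real.exp (-(t * μ))
        * ((∑ k ∈ Finset.range M, φ ^ k * Real.exp (t * (k:ℝ))) / W) := by
        rw [← htdef, step1, mul_div_assoc]
    _ ≤ ((∑ k ∈ Finset.range M, φ ^ k * Real.exp (-t * (k:ℝ))) / W)
        * ((∑ k ∈ Finset.range M, φ ^ k * Real.exp (t * (k:ℝ))) / W) := by
        refine mul_le_mul_of_nonneg_right jensen ?_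
        have h0 : 0 ≤ ∑ k ∈ Finset.range M, φ ^ k * Real.exp (t * (k:ℝ)) :=
          Finset.sum_nonneg fun k _ => by positivity
        positivity
    _ = ((1 - r ^ M)/(1 - r) / W) * ((1 - q ^ M)/(1 - q) / W) := by rw [hSq, hSr]
    _ ≤ Real.exp (10 * α ^ 2) := hfinal

/-- Moment generating function bound. For `0.5 ≤ φ < 1`, any `i` and
`-0.2 < α < 0.2`, the expectation of `(1/φ)^{α (v_π^{←}[i] - E[v_π^{←}[i]])}` under
`M(φ, id)` is at most `e^{10 α²}`. -/
theorem mgf_bound (n : ℕ) (φ : ℝ) (hφ0 : 0.5 ≤ φ) (hφ1 : φ < 1) (i : Fin n)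
    (α : ℝ) (hα0 : -0.2 < α) (hα1 : α < 0.2) :
    mExp φ 1 (fun π =>
        (1 / φ) ^ (α * (leftAdj 1 π i - mExp φ 1 (fun π' => leftAdj 1 π' i)))) ≤
      Real.exp (10 * α ^ 2) := by
  have hφp : (0:ℝ) < φ := by norm_num at hφ0 ⊢; linarith
  have hα : |α| ≤ 0.2 := abs_le.mpr ⟨by linarith, by linarith⟩
  have hμ : mExp φ 1 (fun π' => leftAdj 1 π' i)
      = (∑ k ∈ Finset.range ((i : ℕ) + 1), φ ^ k * (k:ℝ))
        / (∑ k ∈ Finset.range ((i : ℕ) + 1), φ ^ k) := by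
    have h1 : mExp φ 1 (fun π' => leftAdj 1 π' i)
        = mExp φ 1 (fun π' => ((fun k : ℕ => (k:ℝ)) (vNat π' i))) := by
      unfold mExp
      refine Finset.sum_congr rfl fun π _ => ?_
      simp only [leftAdj_one]
    rw [h1, mExp_vNat hφp i (fun k => (k:ℝ))]
  have h3 : (fun π : Equiv.Perm (Fin n) =>
        (1 / φ) ^ (α * (leftAdj 1 π i - mExp φ 1 (fun π' => leftAdj 1 π' i))))
      = fun π => (fun k : ℕ => Real.exp ((Real.log (1/φ) * α) * ((k:ℝ)
          - (∑ k ∈ Finset.range ((i : ℕ) + 1), φ ^ k * (k:ℝ))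
            / (∑ k ∈ Finset.range ((i : ℕ) + 1), φ ^ k)))) (vNat π i) := by
    funext π
    rw [hμ, leftAdj_one, Real.rpow_def_of_pos (by positivity)]
    exact congrArg Real.exp (by ring)
  rw [h3, mExp_vNat hφp i (fun k : ℕ => Real.exp ((Real.log (1/φ) * α) * ((k:ℝ)
      - (∑ k ∈ Finset.range ((i : ℕ) + 1), φ ^ k * (k:ℝ))
        / (∑ k ∈ Finset.range ((i : ℕ) + 1), φ ^ k))))]
  exact analytic_bound hφ0 hφ1 hα (Nat.succ_ne_zero _)

end Mallows
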